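/- Fix δ > 0 and let h̃(y) = D₂/(y²+δ) + D₃ with D₂ = 2√(2π)/(β²(√(2π) − (1+δ)I(δ))) and D₃ = −(√(2π) + I(δ)D₂)/√(2π), assuming √(2π) − (1+δ)I(δ) ≠ 0. Then ∫ h̃(y) q(y) dy = P_z for all P_x, P_z, i.e. h̃ is an unbiased pointer for σ_z: equivalently (1/√(2π))∫ h̃ e^{-y²/2} dy = −1, (β²/√(2π))∫ h̃(y)(y²−1)e^{-y²/2} dy = 2, and ∫ h̃(y) y e^{-y²/2} dy = 0. -/

import Mathlib

open MeasureTheory Real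

lemma odd_integral_zero (f : ℝ → ℝ) (hf : ∀ y, f (-y) = - f y) : ∫ y : ℝ, f y = 0 := by
  have h1 : ∫ y : ℝ, f (-y) = ∫ y : ℝ, f y := MeasureTheory.integral_neg_eq_self f volume
  have h2 : ∫ y : ℝ, f (-y) = - ∫ y : ℝ, f y := by
    simp_rw [hf]; exact integral_neg f
  linarith

lemma intG : Integrable (fun y : ℝ => Real.exp (-y ^ 2 / 2)) := by
  have h := integrable_exp_neg_mul_sq (show (0:ℝ) < 1/2 by norm_num)
  convert h using 2 with y
  ring_nf

lemma intY2G : Integrable (fun y : ℝ => y ^ 2 * Real.exp (-y ^ 2 / 2)) := by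
  have h := integrable_rpow_mul_exp_neg_mul_sq (show (0:ℝ) < 1/2 by norm_num)
    (show (-1:ℝ) < 2 by norm_num)
  have h2 : (fun x : ℝ => x ^ (2:ℝ) * Real.exp (-(1/2) * x ^ 2))
      = fun y : ℝ => y ^ 2 * Real.exp (-y ^ 2 / 2) := by
    funext y
    have : -(1/2 : ℝ) * y ^ 2 = -y ^ 2 / 2 := by ring
    rw [this, ← Real.rpow_natCast y 2]
    norm_num
  rwa [h2] at h

lemma intYG : Integrable (fun y : ℝ => y * Real.exp (-y ^ 2 / 2)) := by
  have h := integrable_mul_exp_neg_mul_sq (show (0:ℝ) < 1/2 by norm_num)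
  convert h using 2 with y
  ring_nf

lemma contg {δ : ℝ} (hδ : 0 < δ) :
    Continuous (fun y : ℝ => Real.exp (-y ^ 2 / 2) / (y ^ 2 + δ)) := by
  apply Continuous.div
  · exact (Continuous.neg (continuous_pow 2)).div_const 2 |>.rexp
  · exact (continuous_pow 2).add continuous_const
  · intro y; positivity

lemma intg {δ : ℝ} (hδ : 0 < δ) :
    Integrable (fun y : ℝ => Real.exp (-y ^ 2 / 2) / (y ^ 2 + δ)) := by
  apply Integrable.mono' (intG.const_mul δ⁻¹) (contg hδ).aestronglyMeasurable
  filter_upwards with y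
  have h1 : 0 < y ^ 2 + δ := by positivity
  rw [Real.norm_eq_abs, abs_of_nonneg (by positivity)]
  rw [div_le_iff₀ h1]
  have : δ ≤ y ^ 2 + δ := by nlinarith [sq_nonneg y]
  calc Real.exp (-y ^ 2 / 2) = δ⁻¹ * Real.exp (-y ^ 2 / 2) * δ := by
        field_simp
    _ ≤ δ⁻¹ * Real.exp (-y ^ 2 / 2) * (y ^ 2 + δ) := by
        apply mul_le_mul_of_nonneg_left this
        positivity

lemma intYg {δ : ℝ} (hδ : 0 < δ) :
    Integrable (fun y : ℝ => y * (Real.exp (-y ^ 2 / 2) / (y ^ 2 + δ))) := by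
  apply Integrable.mono' ((intYG.abs).const_mul δ⁻¹)
    (continuous_id.mul (contg hδ)).aestronglyMeasurable
  filter_upwards with y
  have h1 : 0 < y ^ 2 + δ := by positivity
  simp only [Real.norm_eq_abs, Pi.mul_apply, id_eq]
  rw [abs_mul, abs_div, abs_of_nonneg (Real.exp_pos _).le, abs_of_nonneg h1.le,
    mul_div_assoc', div_le_iff₀ h1, abs_mul, abs_of_nonneg (Real.exp_pos _).le]
  have h2 : 0 ≤ δ⁻¹ * (|y| * Real.exp (-y ^ 2 / 2)) * y ^ 2 := by positivity
  have h3 : δ⁻¹ * (|y| * Real.exp (-y ^ 2 / 2)) * (y ^ 2 + δ)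
      = δ⁻¹ * (|y| * Real.exp (-y ^ 2 / 2)) * y ^ 2 + |y| * Real.exp (-y ^ 2 / 2) := by
    field_simp
  linarith

lemma intY2g {δ : ℝ} (hδ : 0 < δ) :
    Integrable (fun y : ℝ => y ^ 2 * (Real.exp (-y ^ 2 / 2) / (y ^ 2 + δ))) := by
  apply Integrable.mono' intG
    ((continuous_pow 2).mul (contg hδ)).aestronglyMeasurable
  filter_upwards with y
  have h1 : 0 < y ^ 2 + δ := by positivity
  simp only [Real.norm_eq_abs, Pi.mul_apply]; rw [abs_of_nonneg (by positivity)]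
  rw [mul_div_assoc', div_le_iff₀ h1]
  nlinarith [Real.exp_pos (-y ^ 2 / 2), sq_nonneg y, (Real.exp_pos (-y ^ 2 / 2)).le]

lemma IG : ∫ y : ℝ, Real.exp (-y ^ 2 / 2) = Real.sqrt (2 * π) := by
  have h := integral_gaussian (1/2 : ℝ)
  rw [show (π / (1/2 : ℝ)) = 2 * π by ring] at h
  rw [← h]
  congr 1 with y
  congr 1
  ring

lemma IY2G : ∫ y : ℝ, y ^ 2 * Real.exp (-y ^ 2 / 2) = Real.sqrt (2 * π) := by
  have hv : ∀ y : ℝ, HasDerivAt (fun x : ℝ => Real.exp (-x ^ 2 / 2))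
      (-y * Real.exp (-y ^ 2 / 2)) y := by
    intro y
    have h1 : HasDerivAt (fun x : ℝ => -x ^ 2 / 2) (-y) y := by
      have := (hasDerivAt_pow 2 y).neg.div_const 2
      exact this.congr_deriv (by norm_num; ring)
    simpa [mul_comm] using h1.exp
  have hu : ∀ y : ℝ, HasDerivAt (fun x : ℝ => x) (1 : ℝ) y := fun y => hasDerivAt_id y
  have hkey := integral_mul_deriv_eq_deriv_mul_of_integrable (fun x _ => hu x) (fun x _ => hv x)
    (by
      have : ((fun x : ℝ => x) * fun y => -y * Real.exp (-y ^ 2 / 2))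
          = fun y : ℝ => -(y ^ 2 * Real.exp (-y ^ 2 / 2)) := by
        funext y; simp [Pi.mul_apply]; ring
      rw [this]; exact intY2G.neg)
    (by
      have : ((fun _ : ℝ => (1:ℝ)) * fun x : ℝ => Real.exp (-x ^ 2 / 2))
          = fun y : ℝ => Real.exp (-y ^ 2 / 2) := by
        funext y; simp
      rw [this]; exact intG)
    (by
      have : ((fun x : ℝ => x) * fun x : ℝ => Real.exp (-x ^ 2 / 2))
          = fun y : ℝ => y * Real.exp (-y ^ 2 / 2) := by
        funext y; simp
      rw [this]; exact intYG)
  have h1 : ∫ y : ℝ, y * (-y * Real.exp (-y ^ 2 / 2))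
      = - ∫ y : ℝ, y ^ 2 * Real.exp (-y ^ 2 / 2) := by
    rw [← integral_neg]
    congr 1 with y
    ring
  rw [h1] at hkey
  have h2 : ∫ y : ℝ, (1:ℝ) * Real.exp (-y ^ 2 / 2) = Real.sqrt (2 * π) := by
    simp_rw [one_mul]; exact IG
  rw [h2] at hkey
  linarith

lemma IY2g {δ : ℝ} (hδ : 0 < δ) :
    ∫ y : ℝ, y ^ 2 * (Real.exp (-y ^ 2 / 2) / (y ^ 2 + δ))
      = Real.sqrt (2 * π) - δ * ∫ y : ℝ, Real.exp (-y ^ 2 / 2) / (y ^ 2 + δ) := by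
  have hptw : ∀ y : ℝ, y ^ 2 * (Real.exp (-y ^ 2 / 2) / (y ^ 2 + δ))
      = Real.exp (-y ^ 2 / 2) - δ * (Real.exp (-y ^ 2 / 2) / (y ^ 2 + δ)) := by
    intro y
    have h1 : y ^ 2 + δ ≠ 0 := by positivity
    field_simp
    ring
  simp_rw [hptw]
  rw [integral_sub intG ((intg hδ).const_mul δ), integral_const_mul, IG]

/-- The density of the weighted homodyne photocurrent endpoint. -/
noncomputable def q (β Px Pz y : ℝ) : ℝ :=
  (Real.exp (-y ^ 2 / 2) / Real.sqrt (2 * π)) *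
    (1 + β * y * Px + β ^ 2 * (y ^ 2 - 1) * (Pz + 1) / 2)

theorem stmt_17 (δ β : ℝ) (hδ : 0 < δ) (hβ0 : 0 < β) (hβ1 : β ≤ 1)
    (hne : Real.sqrt (2 * π) -
      (1 + δ) * (∫ y : ℝ, Real.exp (-y ^ 2 / 2) / (y ^ 2 + δ)) ≠ 0)
    (D₂ D₃ : ℝ)
    (hD₂ : D₂ = 2 * Real.sqrt (2 * π) /
      (β ^ 2 * (Real.sqrt (2 * π) -
        (1 + δ) * ∫ y : ℝ, Real.exp (-y ^ 2 / 2) / (y ^ 2 + δ))))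
    (hD₃ : D₃ = -(Real.sqrt (2 * π) +
        (∫ y : ℝ, Real.exp (-y ^ 2 / 2) / (y ^ 2 + δ)) * D₂) / Real.sqrt (2 * π))
    (h : ℝ → ℝ) (hh : h = fun y => D₂ / (y ^ 2 + δ) + D₃) :
    (∀ Px Pz : ℝ, ∫ y : ℝ, h y * q β Px Pz y = Pz) ∧
    ((1 / Real.sqrt (2 * π)) * ∫ y : ℝ, h y * Real.exp (-y ^ 2 / 2) = -1) ∧
    ((β ^ 2 / Real.sqrt (2 * π)) *
        ∫ y : ℝ, h y * (y ^ 2 - 1) * Real.exp (-y ^ 2 / 2) = 2) ∧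
    (∫ y : ℝ, h y * y * Real.exp (-y ^ 2 / 2) = 0) := by
  set S := Real.sqrt (2 * π) with hS
  set I := ∫ y : ℝ, Real.exp (-y ^ 2 / 2) / (y ^ 2 + δ) with hI
  have hSpos : 0 < S := Real.sqrt_pos.mpr (by positivity)
  have hSne : S ≠ 0 := ne_of_gt hSpos
  have hβne : β ≠ 0 := ne_of_gt hβ0
  have hβ2 : β ^ 2 ≠ 0 := pow_ne_zero 2 hβne
  have e1 : (fun y : ℝ => h y * Real.exp (-y ^ 2 / 2))
      = fun y => D₂ * (Real.exp (-y ^ 2 / 2) / (y ^ 2 + δ)) + D₃ * Real.exp (-y ^ 2 / 2) := by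
    funext y; rw [hh]; ring
  have e2 : (fun y : ℝ => h y * y * Real.exp (-y ^ 2 / 2))
      = fun y => D₂ * (y * (Real.exp (-y ^ 2 / 2) / (y ^ 2 + δ)))
          + D₃ * (y * Real.exp (-y ^ 2 / 2)) := by
    funext y; rw [hh]; ring
  have e3 : (fun y : ℝ => h y * (y ^ 2 - 1) * Real.exp (-y ^ 2 / 2))
      = fun y => (D₂ * (y ^ 2 * (Real.exp (-y ^ 2 / 2) / (y ^ 2 + δ)))
            - D₂ * (Real.exp (-y ^ 2 / 2) / (y ^ 2 + δ)))
          + (D₃ * (y ^ 2 * Real.exp (-y ^ 2 / 2)) - D₃ * Real.exp (-y ^ 2 / 2)) := by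
    funext y; rw [hh]; ring
  have i1 : Integrable (fun y : ℝ => h y * Real.exp (-y ^ 2 / 2)) := by
    rw [e1]; exact ((intg hδ).const_mul D₂).add (intG.const_mul D₃)
  have i2 : Integrable (fun y : ℝ => h y * y * Real.exp (-y ^ 2 / 2)) := by
    rw [e2]; exact ((intYg hδ).const_mul D₂).add (intYG.const_mul D₃)
  have i3 : Integrable (fun y : ℝ => h y * (y ^ 2 - 1) * Real.exp (-y ^ 2 / 2)) := by
    rw [e3]
    exact (((intY2g hδ).const_mul D₂).sub ((intg hδ).const_mul D₂)).add
      ((intY2G.const_mul D₃).sub (intG.const_mul D₃))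
  have hA : ∫ y : ℝ, h y * Real.exp (-y ^ 2 / 2) = -S := by
    rw [e1, integral_add ((intg hδ).const_mul D₂) (intG.const_mul D₃),
      integral_const_mul, integral_const_mul, IG, ← hI, ← hS, hD₃]
    field_simp
    ring
  have hC : ∫ y : ℝ, h y * y * Real.exp (-y ^ 2 / 2) = 0 := by
    apply odd_integral_zero
    intro y
    rw [hh]
    simp only [neg_sq]
    ring
  have hB : ∫ y : ℝ, h y * (y ^ 2 - 1) * Real.exp (-y ^ 2 / 2) = 2 * S / β ^ 2 := by
    have iB1 : Integrable (fun y : ℝ => D₂ * (y ^ 2 * (Real.exp (-y ^ 2 / 2) / (y ^ 2 + δ)))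
        - D₂ * (Real.exp (-y ^ 2 / 2) / (y ^ 2 + δ))) := by
      exact ((intY2g hδ).const_mul D₂).sub ((intg hδ).const_mul D₂)
    have iB2 : Integrable (fun y : ℝ => D₃ * (y ^ 2 * Real.exp (-y ^ 2 / 2))
        - D₃ * Real.exp (-y ^ 2 / 2)) := by
      exact (intY2G.const_mul D₃).sub (intG.const_mul D₃)
    rw [e3, integral_add iB1 iB2,
      integral_sub ((intY2g hδ).const_mul D₂) ((intg hδ).const_mul D₂),
      integral_sub (intY2G.const_mul D₃) (intG.const_mul D₃),
      integral_const_mul, integral_const_mul, integral_const_mul, integral_const_mul,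
      IY2g hδ, IY2G, IG, ← hI, ← hS, hD₂]
    have hden : β ^ 2 * (S - (1 + δ) * I) ≠ 0 := mul_ne_zero hβ2 hne
    field_simp
    ring
  refine ⟨?_, ?_, ?_, hC⟩
  · intro Px Pz
    have e4 : (fun y : ℝ => h y * q β Px Pz y)
        = fun y => (1 / S) * (h y * Real.exp (-y ^ 2 / 2))
            + (β * Px / S) * (h y * y * Real.exp (-y ^ 2 / 2))
            + (β ^ 2 * (Pz + 1) / (2 * S)) * (h y * (y ^ 2 - 1) * Real.exp (-y ^ 2 / 2)) := by
      funext y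
      simp only [q, ← hS]
      ring
    have j1 : Integrable (fun y : ℝ => 1 / S * (h y * Real.exp (-y ^ 2 / 2))
        + β * Px / S * (h y * y * Real.exp (-y ^ 2 / 2))) := by
      exact (i1.const_mul _).add (i2.const_mul _)
    rw [e4, integral_add j1 (i3.const_mul _),
      integral_add (i1.const_mul _) (i2.const_mul _),
      integral_const_mul, integral_const_mul, integral_const_mul, hA, hB, hC]
    field_simp
    ring
  · rw [hA]; field_simp
  · rw [hB]; field_simp
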